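/- For every elasticity tensor C there exist unique real numbers λ, μ, unique symmetric traceless real 3×3 matrices a, b, and a unique harmonic tensor D ∈ H⁴ such that C i j k l = λ δᵢⱼ δₖₗ + μ (δᵢₖ δⱼₗ + δᵢₗ δⱼₖ) + δᵢⱼ a k l + δₖₗ a i j + δᵢₖ b j l + δⱼₗ b i k + δᵢₗ b j k + δⱼₖ b i l + D i j k l for all indices. Moreover λ = (2 tr d(C) − tr v(C))/15, μ = (3 tr v(C) − tr d(C))/30, a = (5 dev d(C) − 4 dev v(C))/7, and b = (3 dev v(C) − 2 dev d(C))/7. -/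
import Mathlib


open Matrix BigOperators

abbrev Mat3 := Matrix (Fin 3) (Fin 3) ℝ
abbrev T4 := Fin 3 → Fin 3 → Fin 3 → Fin 3 → ℝ

/-- Kronecker delta on `Fin 3`. -/
def kd (i j : Fin 3) : ℝ := if i = j then 1 else 0

/-- An elasticity tensor: minor and major index symmetries. -/
def IsEla (C : T4) : Prop :=
  ∀ i j k l, C i j k l = C j i k l ∧ C i j k l = C i j l k ∧ C i j k l = C k l i j

/-- A harmonic fourth-order tensor: totally symmetric and traceless. -/
def IsHarm (D : T4) : Prop :=
  (∀ i j k l, D i j k l = D j i k l) ∧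
  (∀ i j k l, D i j k l = D i k j l) ∧
  (∀ i j k l, D i j k l = D i j l k) ∧
  (∀ i j, ∑ k, D k k i j = 0)

/-- The dilatation tensor `d(C) i j = ∑ₖ C k k i j`. -/
noncomputable def dil (C : T4) : Mat3 := Matrix.of fun i j => ∑ k, C k k i j

/-- The Voigt tensor `v(C) i j = ∑ₖ C k i k j`. -/
noncomputable def voigt (C : T4) : Mat3 := Matrix.of fun i j => ∑ k, C k i k j

/-- The deviatoric (traceless) part of a 3×3 matrix. -/
noncomputable def dev (m : Mat3) : Mat3 := m - (m.trace / 3) • 1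

/-- The harmonic decomposition equation `C = (λ, μ, a, b, D)`. -/
def HarmDecomp (C : T4) (lam mu : ℝ) (a b : Mat3) (D : T4) : Prop :=
  ∀ i j k l, C i j k l =
    lam * kd i j * kd k l + mu * (kd i k * kd j l + kd i l * kd j k) +
    kd i j * a k l + kd k l * a i j +
    kd i k * b j l + kd j l * b i k + kd i l * b j k + kd j k * b i l +
    D i j k l


private lemma fin3_all {P : Fin 3 → Prop} (h0 : P 0) (h1 : P 1) (h2 : P 2) : ∀ i, P i := by
  intro i
  fin_cases i
  · exact h0
  · exact h1
  · exact h2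

set_option maxHeartbeats 4000000 in
/-- every elasticity tensor admits a unique harmonic decomposition. -/
theorem harmonic_decomposition_exists_unique (C : T4) (hC : IsEla C) :
    ∃ (lam mu : ℝ) (a b : Mat3) (D : T4),
      (aᵀ = a ∧ a.trace = 0 ∧ bᵀ = b ∧ b.trace = 0 ∧ IsHarm D ∧
        HarmDecomp C lam mu a b D) ∧
      (lam = (2 * (dil C).trace - (voigt C).trace) / 15 ∧
       mu = (3 * (voigt C).trace - (dil C).trace) / 30 ∧
       a = (5 / 7 : ℝ) • dev (dil C) - (4 / 7 : ℝ) • dev (voigt C) ∧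
       b = (3 / 7 : ℝ) • dev (voigt C) - (2 / 7 : ℝ) • dev (dil C)) ∧
      (∀ (lam' mu' : ℝ) (a' b' : Mat3) (D' : T4),
        (a'ᵀ = a' ∧ a'.trace = 0 ∧ b'ᵀ = b' ∧ b'.trace = 0 ∧ IsHarm D' ∧
          HarmDecomp C lam' mu' a' b' D') →
        lam' = lam ∧ mu' = mu ∧ a' = a ∧ b' = b ∧ D' = D) := by
  have m1 : ∀ i j k l, C i j k l = C j i k l := fun i j k l => (hC i j k l).1
  have m2 : ∀ i j k l, C i j k l = C i j l k := fun i j k l => (hC i j k l).2.1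
  have mj : ∀ i j k l, C i j k l = C k l i j := fun i j k l => (hC i j k l).2.2
  have s10 : ∀ k l, C 1 0 k l = C 0 1 k l := fun k l => m1 1 0 k l
  have s20 : ∀ k l, C 2 0 k l = C 0 2 k l := fun k l => m1 2 0 k l
  have s21 : ∀ k l, C 2 1 k l = C 1 2 k l := fun k l => m1 2 1 k l
  have t10 : ∀ i j, C i j 1 0 = C i j 0 1 := fun i j => m2 i j 1 0
  have t20 : ∀ i j, C i j 2 0 = C i j 0 2 := fun i j => m2 i j 2 0
  have t21 : ∀ i j, C i j 2 1 = C i j 1 2 := fun i j => m2 i j 2 1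
  have u1 : C 0 1 0 0 = C 0 0 0 1 := (hC 0 1 0 0).2.2
  have u2 : C 0 2 0 0 = C 0 0 0 2 := (hC 0 2 0 0).2.2
  have u3 : C 1 1 0 0 = C 0 0 1 1 := (hC 1 1 0 0).2.2
  have u4 : C 1 2 0 0 = C 0 0 1 2 := (hC 1 2 0 0).2.2
  have u5 : C 2 2 0 0 = C 0 0 2 2 := (hC 2 2 0 0).2.2
  have u6 : C 0 2 0 1 = C 0 1 0 2 := (hC 0 2 0 1).2.2
  have u7 : C 1 1 0 1 = C 0 1 1 1 := (hC 1 1 0 1).2.2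
  have u8 : C 1 2 0 1 = C 0 1 1 2 := (hC 1 2 0 1).2.2
  have u9 : C 2 2 0 1 = C 0 1 2 2 := (hC 2 2 0 1).2.2
  have u10 : C 1 1 0 2 = C 0 2 1 1 := (hC 1 1 0 2).2.2
  have u11 : C 1 2 0 2 = C 0 2 1 2 := (hC 1 2 0 2).2.2
  have u12 : C 2 2 0 2 = C 0 2 2 2 := (hC 2 2 0 2).2.2
  have u13 : C 1 2 1 1 = C 1 1 1 2 := (hC 1 2 1 1).2.2
  have u14 : C 2 2 1 1 = C 1 1 2 2 := (hC 2 2 1 1).2.2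
  have u15 : C 2 2 1 2 = C 1 2 2 2 := (hC 2 2 1 2).2.2
  have kdsymm : ∀ p q : Fin 3, kd p q = kd q p := by
    intro p q; simp [kd, eq_comm]
  have hdeventry : ∀ (m : Mat3) (p q : Fin 3),
      dev m p q = m p q - m.trace / 3 * (if p = q then (1:ℝ) else 0) := by
    intro m p q
    simp only [dev, Matrix.sub_apply, Matrix.smul_apply, Matrix.one_apply, smul_eq_mul]
  have hdevtr : ∀ m : Mat3, (dev m).trace = 0 := by
    intro m
    simp only [dev, Matrix.trace_sub, Matrix.trace_smul, Matrix.trace_one, smul_eq_mul,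
      Fintype.card_fin, Nat.cast_ofNat]
    ring
  have hsdil : ∀ p q, dil C p q = dil C q p := by
    intro p q
    simp only [dil, Matrix.of_apply, Fin.sum_univ_three]
    rw [m2 0 0 p q, m2 1 1 p q, m2 2 2 p q]
  have hsv : ∀ p q, voigt C p q = voigt C q p := by
    intro p q
    simp only [voigt, Matrix.of_apply, Fin.sum_univ_three]
    rw [mj 0 p 0 q, mj 1 p 1 q, mj 2 p 2 q]
  have k00 : kd 0 0 = 1 := if_pos rfl
  have it00 : (if (0 : Fin 3) = 0 then (1:ℝ) else 0) = 1 := if_pos rfl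
  have k01 : kd 0 1 = 0 := if_neg (by decide)
  have it01 : (if (0 : Fin 3) = 1 then (1:ℝ) else 0) = 0 := if_neg (by decide)
  have k02 : kd 0 2 = 0 := if_neg (by decide)
  have it02 : (if (0 : Fin 3) = 2 then (1:ℝ) else 0) = 0 := if_neg (by decide)
  have k10 : kd 1 0 = 0 := if_neg (by decide)
  have it10 : (if (1 : Fin 3) = 0 then (1:ℝ) else 0) = 0 := if_neg (by decide)
  have k11 : kd 1 1 = 1 := if_pos rfl
  have it11 : (if (1 : Fin 3) = 1 then (1:ℝ) else 0) = 1 := if_pos rfl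
  have k12 : kd 1 2 = 0 := if_neg (by decide)
  have it12 : (if (1 : Fin 3) = 2 then (1:ℝ) else 0) = 0 := if_neg (by decide)
  have k20 : kd 2 0 = 0 := if_neg (by decide)
  have it20 : (if (2 : Fin 3) = 0 then (1:ℝ) else 0) = 0 := if_neg (by decide)
  have k21 : kd 2 1 = 0 := if_neg (by decide)
  have it21 : (if (2 : Fin 3) = 1 then (1:ℝ) else 0) = 0 := if_neg (by decide)
  have k22 : kd 2 2 = 1 := if_pos rfl
  have it22 : (if (2 : Fin 3) = 2 then (1:ℝ) else 0) = 1 := if_pos rfl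
  set lam := (2 * (dil C).trace - (voigt C).trace) / 15 with hlamdef
  set mu := (3 * (voigt C).trace - (dil C).trace) / 30 with hmudef
  set a := (5 / 7 : ℝ) • dev (dil C) - (4 / 7 : ℝ) • dev (voigt C) with hadef
  set b := (3 / 7 : ℝ) • dev (voigt C) - (2 / 7 : ℝ) • dev (dil C) with hbdef
  have haentry : ∀ p q, a p q = 5 / 7 * dev (dil C) p q - 4 / 7 * dev (voigt C) p q := by
    intro p q
    rw [hadef]
    simp only [Matrix.sub_apply, Matrix.smul_apply, smul_eq_mul]
  have hbentry : ∀ p q, b p q = 3 / 7 * dev (voigt C) p q - 2 / 7 * dev (dil C) p q := by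
    intro p q
    rw [hbdef]
    simp only [Matrix.sub_apply, Matrix.smul_apply, smul_eq_mul]
  have dE00 : dil C 0 0 = C 0 0 0 0 + C 0 0 1 1 + C 0 0 2 2 := by
    simp only [dil, Matrix.of_apply, Fin.sum_univ_three, s10, s20, s21, t10, t20, t21, u1, u2, u3, u4, u5, u6, u7, u8, u9, u10, u11, u12, u13, u14, u15]
  have vE00 : voigt C 0 0 = C 0 0 0 0 + C 0 1 0 1 + C 0 2 0 2 := by
    simp only [voigt, Matrix.of_apply, Fin.sum_univ_three, s10, s20, s21, t10, t20, t21, u1, u2, u3, u4, u5, u6, u7, u8, u9, u10, u11, u12, u13, u14, u15]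
  have dE01 : dil C 0 1 = C 0 0 0 1 + C 0 1 1 1 + C 0 1 2 2 := by
    simp only [dil, Matrix.of_apply, Fin.sum_univ_three, s10, s20, s21, t10, t20, t21, u1, u2, u3, u4, u5, u6, u7, u8, u9, u10, u11, u12, u13, u14, u15]
  have vE01 : voigt C 0 1 = C 0 0 0 1 + C 0 1 1 1 + C 0 2 1 2 := by
    simp only [voigt, Matrix.of_apply, Fin.sum_univ_three, s10, s20, s21, t10, t20, t21, u1, u2, u3, u4, u5, u6, u7, u8, u9, u10, u11, u12, u13, u14, u15]
  have dE02 : dil C 0 2 = C 0 0 0 2 + C 0 2 1 1 + C 0 2 2 2 := by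
    simp only [dil, Matrix.of_apply, Fin.sum_univ_three, s10, s20, s21, t10, t20, t21, u1, u2, u3, u4, u5, u6, u7, u8, u9, u10, u11, u12, u13, u14, u15]
  have vE02 : voigt C 0 2 = C 0 0 0 2 + C 0 1 1 2 + C 0 2 2 2 := by
    simp only [voigt, Matrix.of_apply, Fin.sum_univ_three, s10, s20, s21, t10, t20, t21, u1, u2, u3, u4, u5, u6, u7, u8, u9, u10, u11, u12, u13, u14, u15]
  have dE10 : dil C 1 0 = C 0 0 0 1 + C 0 1 1 1 + C 0 1 2 2 := by
    simp only [dil, Matrix.of_apply, Fin.sum_univ_three, s10, s20, s21, t10, t20, t21, u1, u2, u3, u4, u5, u6, u7, u8, u9, u10, u11, u12, u13, u14, u15]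
  have vE10 : voigt C 1 0 = C 0 0 0 1 + C 0 1 1 1 + C 0 2 1 2 := by
    simp only [voigt, Matrix.of_apply, Fin.sum_univ_three, s10, s20, s21, t10, t20, t21, u1, u2, u3, u4, u5, u6, u7, u8, u9, u10, u11, u12, u13, u14, u15]
  have dE11 : dil C 1 1 = C 0 0 1 1 + C 1 1 1 1 + C 1 1 2 2 := by
    simp only [dil, Matrix.of_apply, Fin.sum_univ_three, s10, s20, s21, t10, t20, t21, u1, u2, u3, u4, u5, u6, u7, u8, u9, u10, u11, u12, u13, u14, u15]
  have vE11 : voigt C 1 1 = C 0 1 0 1 + C 1 1 1 1 + C 1 2 1 2 := by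
    simp only [voigt, Matrix.of_apply, Fin.sum_univ_three, s10, s20, s21, t10, t20, t21, u1, u2, u3, u4, u5, u6, u7, u8, u9, u10, u11, u12, u13, u14, u15]
  have dE12 : dil C 1 2 = C 0 0 1 2 + C 1 1 1 2 + C 1 2 2 2 := by
    simp only [dil, Matrix.of_apply, Fin.sum_univ_three, s10, s20, s21, t10, t20, t21, u1, u2, u3, u4, u5, u6, u7, u8, u9, u10, u11, u12, u13, u14, u15]
  have vE12 : voigt C 1 2 = C 0 1 0 2 + C 1 1 1 2 + C 1 2 2 2 := by
    simp only [voigt, Matrix.of_apply, Fin.sum_univ_three, s10, s20, s21, t10, t20, t21, u1, u2, u3, u4, u5, u6, u7, u8, u9, u10, u11, u12, u13, u14, u15]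
  have dE20 : dil C 2 0 = C 0 0 0 2 + C 0 2 1 1 + C 0 2 2 2 := by
    simp only [dil, Matrix.of_apply, Fin.sum_univ_three, s10, s20, s21, t10, t20, t21, u1, u2, u3, u4, u5, u6, u7, u8, u9, u10, u11, u12, u13, u14, u15]
  have vE20 : voigt C 2 0 = C 0 0 0 2 + C 0 1 1 2 + C 0 2 2 2 := by
    simp only [voigt, Matrix.of_apply, Fin.sum_univ_three, s10, s20, s21, t10, t20, t21, u1, u2, u3, u4, u5, u6, u7, u8, u9, u10, u11, u12, u13, u14, u15]
  have dE21 : dil C 2 1 = C 0 0 1 2 + C 1 1 1 2 + C 1 2 2 2 := by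
    simp only [dil, Matrix.of_apply, Fin.sum_univ_three, s10, s20, s21, t10, t20, t21, u1, u2, u3, u4, u5, u6, u7, u8, u9, u10, u11, u12, u13, u14, u15]
  have vE21 : voigt C 2 1 = C 0 1 0 2 + C 1 1 1 2 + C 1 2 2 2 := by
    simp only [voigt, Matrix.of_apply, Fin.sum_univ_three, s10, s20, s21, t10, t20, t21, u1, u2, u3, u4, u5, u6, u7, u8, u9, u10, u11, u12, u13, u14, u15]
  have dE22 : dil C 2 2 = C 0 0 2 2 + C 1 1 2 2 + C 2 2 2 2 := by
    simp only [dil, Matrix.of_apply, Fin.sum_univ_three, s10, s20, s21, t10, t20, t21, u1, u2, u3, u4, u5, u6, u7, u8, u9, u10, u11, u12, u13, u14, u15]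
  have vE22 : voigt C 2 2 = C 0 2 0 2 + C 1 2 1 2 + C 2 2 2 2 := by
    simp only [voigt, Matrix.of_apply, Fin.sum_univ_three, s10, s20, s21, t10, t20, t21, u1, u2, u3, u4, u5, u6, u7, u8, u9, u10, u11, u12, u13, u14, u15]
  have trdE : (dil C).trace = (C 0 0 0 0 + C 0 0 1 1 + C 0 0 2 2 + C 0 0 1 1 + C 1 1 1 1 + C 1 1 2 2 + C 0 0 2 2 + C 1 1 2 2 + C 2 2 2 2) := by
    simp only [Matrix.trace, Matrix.diag, dil, Matrix.of_apply, Fin.sum_univ_three, s10, s20, s21, t10, t20, t21, u1, u2, u3, u4, u5, u6, u7, u8, u9, u10, u11, u12, u13, u14, u15]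
    ring
  have trvE : (voigt C).trace = (C 0 0 0 0 + C 0 1 0 1 + C 0 2 0 2 + C 0 1 0 1 + C 1 1 1 1 + C 1 2 1 2 + C 0 2 0 2 + C 1 2 1 2 + C 2 2 2 2) := by
    simp only [Matrix.trace, Matrix.diag, voigt, Matrix.of_apply, Fin.sum_univ_three, s10, s20, s21, t10, t20, t21, u1, u2, u3, u4, u5, u6, u7, u8, u9, u10, u11, u12, u13, u14, u15]
    ring
  have lamE : lam = (2 * (C 0 0 0 0 + C 0 0 1 1 + C 0 0 2 2 + C 0 0 1 1 + C 1 1 1 1 + C 1 1 2 2 + C 0 0 2 2 + C 1 1 2 2 + C 2 2 2 2) - (C 0 0 0 0 + C 0 1 0 1 + C 0 2 0 2 + C 0 1 0 1 + C 1 1 1 1 + C 1 2 1 2 + C 0 2 0 2 + C 1 2 1 2 + C 2 2 2 2)) / 15 := by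
    rw [hlamdef, trdE, trvE]
  have muE : mu = (3 * (C 0 0 0 0 + C 0 1 0 1 + C 0 2 0 2 + C 0 1 0 1 + C 1 1 1 1 + C 1 2 1 2 + C 0 2 0 2 + C 1 2 1 2 + C 2 2 2 2) - (C 0 0 0 0 + C 0 0 1 1 + C 0 0 2 2 + C 0 0 1 1 + C 1 1 1 1 + C 1 1 2 2 + C 0 0 2 2 + C 1 1 2 2 + C 2 2 2 2)) / 30 := by
    rw [hmudef, trdE, trvE]
  have aE00 : a 0 0 = 5 / 7 * ((C 0 0 0 0 + C 0 0 1 1 + C 0 0 2 2) - (C 0 0 0 0 + C 0 0 1 1 + C 0 0 2 2 + C 0 0 1 1 + C 1 1 1 1 + C 1 1 2 2 + C 0 0 2 2 + C 1 1 2 2 + C 2 2 2 2) / 3 * 1) - 4 / 7 * ((C 0 0 0 0 + C 0 1 0 1 + C 0 2 0 2) - (C 0 0 0 0 + C 0 1 0 1 + C 0 2 0 2 + C 0 1 0 1 + C 1 1 1 1 + C 1 2 1 2 + C 0 2 0 2 + C 1 2 1 2 + C 2 2 2 2) / 3 * 1) := by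
    rw [haentry, hdeventry, hdeventry, dE00, vE00, trdE, trvE, it00]
  have bE00 : b 0 0 = 3 / 7 * ((C 0 0 0 0 + C 0 1 0 1 + C 0 2 0 2) - (C 0 0 0 0 + C 0 1 0 1 + C 0 2 0 2 + C 0 1 0 1 + C 1 1 1 1 + C 1 2 1 2 + C 0 2 0 2 + C 1 2 1 2 + C 2 2 2 2) / 3 * 1) - 2 / 7 * ((C 0 0 0 0 + C 0 0 1 1 + C 0 0 2 2) - (C 0 0 0 0 + C 0 0 1 1 + C 0 0 2 2 + C 0 0 1 1 + C 1 1 1 1 + C 1 1 2 2 + C 0 0 2 2 + C 1 1 2 2 + C 2 2 2 2) / 3 * 1) := by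
    rw [hbentry, hdeventry, hdeventry, dE00, vE00, trdE, trvE, it00]
  have aE01 : a 0 1 = 5 / 7 * ((C 0 0 0 1 + C 0 1 1 1 + C 0 1 2 2) - (C 0 0 0 0 + C 0 0 1 1 + C 0 0 2 2 + C 0 0 1 1 + C 1 1 1 1 + C 1 1 2 2 + C 0 0 2 2 + C 1 1 2 2 + C 2 2 2 2) / 3 * 0) - 4 / 7 * ((C 0 0 0 1 + C 0 1 1 1 + C 0 2 1 2) - (C 0 0 0 0 + C 0 1 0 1 + C 0 2 0 2 + C 0 1 0 1 + C 1 1 1 1 + C 1 2 1 2 + C 0 2 0 2 + C 1 2 1 2 + C 2 2 2 2) / 3 * 0) := by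
    rw [haentry, hdeventry, hdeventry, dE01, vE01, trdE, trvE, it01]
  have bE01 : b 0 1 = 3 / 7 * ((C 0 0 0 1 + C 0 1 1 1 + C 0 2 1 2) - (C 0 0 0 0 + C 0 1 0 1 + C 0 2 0 2 + C 0 1 0 1 + C 1 1 1 1 + C 1 2 1 2 + C 0 2 0 2 + C 1 2 1 2 + C 2 2 2 2) / 3 * 0) - 2 / 7 * ((C 0 0 0 1 + C 0 1 1 1 + C 0 1 2 2) - (C 0 0 0 0 + C 0 0 1 1 + C 0 0 2 2 + C 0 0 1 1 + C 1 1 1 1 + C 1 1 2 2 + C 0 0 2 2 + C 1 1 2 2 + C 2 2 2 2) / 3 * 0) := by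
    rw [hbentry, hdeventry, hdeventry, dE01, vE01, trdE, trvE, it01]
  have aE02 : a 0 2 = 5 / 7 * ((C 0 0 0 2 + C 0 2 1 1 + C 0 2 2 2) - (C 0 0 0 0 + C 0 0 1 1 + C 0 0 2 2 + C 0 0 1 1 + C 1 1 1 1 + C 1 1 2 2 + C 0 0 2 2 + C 1 1 2 2 + C 2 2 2 2) / 3 * 0) - 4 / 7 * ((C 0 0 0 2 + C 0 1 1 2 + C 0 2 2 2) - (C 0 0 0 0 + C 0 1 0 1 + C 0 2 0 2 + C 0 1 0 1 + C 1 1 1 1 + C 1 2 1 2 + C 0 2 0 2 + C 1 2 1 2 + C 2 2 2 2) / 3 * 0) := by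
    rw [haentry, hdeventry, hdeventry, dE02, vE02, trdE, trvE, it02]
  have bE02 : b 0 2 = 3 / 7 * ((C 0 0 0 2 + C 0 1 1 2 + C 0 2 2 2) - (C 0 0 0 0 + C 0 1 0 1 + C 0 2 0 2 + C 0 1 0 1 + C 1 1 1 1 + C 1 2 1 2 + C 0 2 0 2 + C 1 2 1 2 + C 2 2 2 2) / 3 * 0) - 2 / 7 * ((C 0 0 0 2 + C 0 2 1 1 + C 0 2 2 2) - (C 0 0 0 0 + C 0 0 1 1 + C 0 0 2 2 + C 0 0 1 1 + C 1 1 1 1 + C 1 1 2 2 + C 0 0 2 2 + C 1 1 2 2 + C 2 2 2 2) / 3 * 0) := by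
    rw [hbentry, hdeventry, hdeventry, dE02, vE02, trdE, trvE, it02]
  have aE10 : a 1 0 = 5 / 7 * ((C 0 0 0 1 + C 0 1 1 1 + C 0 1 2 2) - (C 0 0 0 0 + C 0 0 1 1 + C 0 0 2 2 + C 0 0 1 1 + C 1 1 1 1 + C 1 1 2 2 + C 0 0 2 2 + C 1 1 2 2 + C 2 2 2 2) / 3 * 0) - 4 / 7 * ((C 0 0 0 1 + C 0 1 1 1 + C 0 2 1 2) - (C 0 0 0 0 + C 0 1 0 1 + C 0 2 0 2 + C 0 1 0 1 + C 1 1 1 1 + C 1 2 1 2 + C 0 2 0 2 + C 1 2 1 2 + C 2 2 2 2) / 3 * 0) := by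
    rw [haentry, hdeventry, hdeventry, dE10, vE10, trdE, trvE, it10]
  have bE10 : b 1 0 = 3 / 7 * ((C 0 0 0 1 + C 0 1 1 1 + C 0 2 1 2) - (C 0 0 0 0 + C 0 1 0 1 + C 0 2 0 2 + C 0 1 0 1 + C 1 1 1 1 + C 1 2 1 2 + C 0 2 0 2 + C 1 2 1 2 + C 2 2 2 2) / 3 * 0) - 2 / 7 * ((C 0 0 0 1 + C 0 1 1 1 + C 0 1 2 2) - (C 0 0 0 0 + C 0 0 1 1 + C 0 0 2 2 + C 0 0 1 1 + C 1 1 1 1 + C 1 1 2 2 + C 0 0 2 2 + C 1 1 2 2 + C 2 2 2 2) / 3 * 0) := by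
    rw [hbentry, hdeventry, hdeventry, dE10, vE10, trdE, trvE, it10]
  have aE11 : a 1 1 = 5 / 7 * ((C 0 0 1 1 + C 1 1 1 1 + C 1 1 2 2) - (C 0 0 0 0 + C 0 0 1 1 + C 0 0 2 2 + C 0 0 1 1 + C 1 1 1 1 + C 1 1 2 2 + C 0 0 2 2 + C 1 1 2 2 + C 2 2 2 2) / 3 * 1) - 4 / 7 * ((C 0 1 0 1 + C 1 1 1 1 + C 1 2 1 2) - (C 0 0 0 0 + C 0 1 0 1 + C 0 2 0 2 + C 0 1 0 1 + C 1 1 1 1 + C 1 2 1 2 + C 0 2 0 2 + C 1 2 1 2 + C 2 2 2 2) / 3 * 1) := by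
    rw [haentry, hdeventry, hdeventry, dE11, vE11, trdE, trvE, it11]
  have bE11 : b 1 1 = 3 / 7 * ((C 0 1 0 1 + C 1 1 1 1 + C 1 2 1 2) - (C 0 0 0 0 + C 0 1 0 1 + C 0 2 0 2 + C 0 1 0 1 + C 1 1 1 1 + C 1 2 1 2 + C 0 2 0 2 + C 1 2 1 2 + C 2 2 2 2) / 3 * 1) - 2 / 7 * ((C 0 0 1 1 + C 1 1 1 1 + C 1 1 2 2) - (C 0 0 0 0 + C 0 0 1 1 + C 0 0 2 2 + C 0 0 1 1 + C 1 1 1 1 + C 1 1 2 2 + C 0 0 2 2 + C 1 1 2 2 + C 2 2 2 2) / 3 * 1) := by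
    rw [hbentry, hdeventry, hdeventry, dE11, vE11, trdE, trvE, it11]
  have aE12 : a 1 2 = 5 / 7 * ((C 0 0 1 2 + C 1 1 1 2 + C 1 2 2 2) - (C 0 0 0 0 + C 0 0 1 1 + C 0 0 2 2 + C 0 0 1 1 + C 1 1 1 1 + C 1 1 2 2 + C 0 0 2 2 + C 1 1 2 2 + C 2 2 2 2) / 3 * 0) - 4 / 7 * ((C 0 1 0 2 + C 1 1 1 2 + C 1 2 2 2) - (C 0 0 0 0 + C 0 1 0 1 + C 0 2 0 2 + C 0 1 0 1 + C 1 1 1 1 + C 1 2 1 2 + C 0 2 0 2 + C 1 2 1 2 + C 2 2 2 2) / 3 * 0) := by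
    rw [haentry, hdeventry, hdeventry, dE12, vE12, trdE, trvE, it12]
  have bE12 : b 1 2 = 3 / 7 * ((C 0 1 0 2 + C 1 1 1 2 + C 1 2 2 2) - (C 0 0 0 0 + C 0 1 0 1 + C 0 2 0 2 + C 0 1 0 1 + C 1 1 1 1 + C 1 2 1 2 + C 0 2 0 2 + C 1 2 1 2 + C 2 2 2 2) / 3 * 0) - 2 / 7 * ((C 0 0 1 2 + C 1 1 1 2 + C 1 2 2 2) - (C 0 0 0 0 + C 0 0 1 1 + C 0 0 2 2 + C 0 0 1 1 + C 1 1 1 1 + C 1 1 2 2 + C 0 0 2 2 + C 1 1 2 2 + C 2 2 2 2) / 3 * 0) := by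
    rw [hbentry, hdeventry, hdeventry, dE12, vE12, trdE, trvE, it12]
  have aE20 : a 2 0 = 5 / 7 * ((C 0 0 0 2 + C 0 2 1 1 + C 0 2 2 2) - (C 0 0 0 0 + C 0 0 1 1 + C 0 0 2 2 + C 0 0 1 1 + C 1 1 1 1 + C 1 1 2 2 + C 0 0 2 2 + C 1 1 2 2 + C 2 2 2 2) / 3 * 0) - 4 / 7 * ((C 0 0 0 2 + C 0 1 1 2 + C 0 2 2 2) - (C 0 0 0 0 + C 0 1 0 1 + C 0 2 0 2 + C 0 1 0 1 + C 1 1 1 1 + C 1 2 1 2 + C 0 2 0 2 + C 1 2 1 2 + C 2 2 2 2) / 3 * 0) := by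
    rw [haentry, hdeventry, hdeventry, dE20, vE20, trdE, trvE, it20]
  have bE20 : b 2 0 = 3 / 7 * ((C 0 0 0 2 + C 0 1 1 2 + C 0 2 2 2) - (C 0 0 0 0 + C 0 1 0 1 + C 0 2 0 2 + C 0 1 0 1 + C 1 1 1 1 + C 1 2 1 2 + C 0 2 0 2 + C 1 2 1 2 + C 2 2 2 2) / 3 * 0) - 2 / 7 * ((C 0 0 0 2 + C 0 2 1 1 + C 0 2 2 2) - (C 0 0 0 0 + C 0 0 1 1 + C 0 0 2 2 + C 0 0 1 1 + C 1 1 1 1 + C 1 1 2 2 + C 0 0 2 2 + C 1 1 2 2 + C 2 2 2 2) / 3 * 0) := by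
    rw [hbentry, hdeventry, hdeventry, dE20, vE20, trdE, trvE, it20]
  have aE21 : a 2 1 = 5 / 7 * ((C 0 0 1 2 + C 1 1 1 2 + C 1 2 2 2) - (C 0 0 0 0 + C 0 0 1 1 + C 0 0 2 2 + C 0 0 1 1 + C 1 1 1 1 + C 1 1 2 2 + C 0 0 2 2 + C 1 1 2 2 + C 2 2 2 2) / 3 * 0) - 4 / 7 * ((C 0 1 0 2 + C 1 1 1 2 + C 1 2 2 2) - (C 0 0 0 0 + C 0 1 0 1 + C 0 2 0 2 + C 0 1 0 1 + C 1 1 1 1 + C 1 2 1 2 + C 0 2 0 2 + C 1 2 1 2 + C 2 2 2 2) / 3 * 0) := by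
    rw [haentry, hdeventry, hdeventry, dE21, vE21, trdE, trvE, it21]
  have bE21 : b 2 1 = 3 / 7 * ((C 0 1 0 2 + C 1 1 1 2 + C 1 2 2 2) - (C 0 0 0 0 + C 0 1 0 1 + C 0 2 0 2 + C 0 1 0 1 + C 1 1 1 1 + C 1 2 1 2 + C 0 2 0 2 + C 1 2 1 2 + C 2 2 2 2) / 3 * 0) - 2 / 7 * ((C 0 0 1 2 + C 1 1 1 2 + C 1 2 2 2) - (C 0 0 0 0 + C 0 0 1 1 + C 0 0 2 2 + C 0 0 1 1 + C 1 1 1 1 + C 1 1 2 2 + C 0 0 2 2 + C 1 1 2 2 + C 2 2 2 2) / 3 * 0) := by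
    rw [hbentry, hdeventry, hdeventry, dE21, vE21, trdE, trvE, it21]
  have aE22 : a 2 2 = 5 / 7 * ((C 0 0 2 2 + C 1 1 2 2 + C 2 2 2 2) - (C 0 0 0 0 + C 0 0 1 1 + C 0 0 2 2 + C 0 0 1 1 + C 1 1 1 1 + C 1 1 2 2 + C 0 0 2 2 + C 1 1 2 2 + C 2 2 2 2) / 3 * 1) - 4 / 7 * ((C 0 2 0 2 + C 1 2 1 2 + C 2 2 2 2) - (C 0 0 0 0 + C 0 1 0 1 + C 0 2 0 2 + C 0 1 0 1 + C 1 1 1 1 + C 1 2 1 2 + C 0 2 0 2 + C 1 2 1 2 + C 2 2 2 2) / 3 * 1) := by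
    rw [haentry, hdeventry, hdeventry, dE22, vE22, trdE, trvE, it22]
  have bE22 : b 2 2 = 3 / 7 * ((C 0 2 0 2 + C 1 2 1 2 + C 2 2 2 2) - (C 0 0 0 0 + C 0 1 0 1 + C 0 2 0 2 + C 0 1 0 1 + C 1 1 1 1 + C 1 2 1 2 + C 0 2 0 2 + C 1 2 1 2 + C 2 2 2 2) / 3 * 1) - 2 / 7 * ((C 0 0 2 2 + C 1 1 2 2 + C 2 2 2 2) - (C 0 0 0 0 + C 0 0 1 1 + C 0 0 2 2 + C 0 0 1 1 + C 1 1 1 1 + C 1 1 2 2 + C 0 0 2 2 + C 1 1 2 2 + C 2 2 2 2) / 3 * 1) := by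
    rw [hbentry, hdeventry, hdeventry, dE22, vE22, trdE, trvE, it22]
  have hsa : ∀ p q, a p q = a q p := by
    intro p q
    rw [haentry p q, haentry q p, hdeventry, hdeventry, hdeventry, hdeventry,
      hsdil p q, hsv p q]
    by_cases h : p = q
    · subst h; ring
    · simp only [if_neg h, if_neg (Ne.symm h)]
  have hsb : ∀ p q, b p q = b q p := by
    intro p q
    rw [hbentry p q, hbentry q p, hdeventry, hdeventry, hdeventry, hdeventry,
      hsdil p q, hsv p q]
    by_cases h : p = q
    · subst h; ring
    · simp only [if_neg h, if_neg (Ne.symm h)]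
  have haT : aᵀ = a := by
    ext p q
    rw [Matrix.transpose_apply]
    exact hsa q p
  have hbT : bᵀ = b := by
    ext p q
    rw [Matrix.transpose_apply]
    exact hsb q p
  have hatr : a.trace = 0 := by
    rw [hadef]
    simp [Matrix.trace_sub, Matrix.trace_smul, hdevtr]
  have hbtr : b.trace = 0 := by
    rw [hbdef]
    simp [Matrix.trace_sub, Matrix.trace_smul, hdevtr]
  set D : T4 := fun i j k l =>
    C i j k l - (lam * kd i j * kd k l + mu * (kd i k * kd j l + kd i l * kd j k) +
      kd i j * a k l + kd k l * a i j +
      kd i k * b j l + kd j l * b i k + kd i l * b j k + kd j k * b i l) with hDdef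
  have hDapp : ∀ i j k l, D i j k l =
      C i j k l - (lam * kd i j * kd k l + mu * (kd i k * kd j l + kd i l * kd j k) +
        kd i j * a k l + kd k l * a i j +
        kd i k * b j l + kd j l * b i k + kd i l * b j k + kd j k * b i l) :=
    fun i j k l => rfl
  have hHD : HarmDecomp C lam mu a b D := by
    intro i j k l
    rw [hDapp]
    ring
  have hsym1 : ∀ i j k l, D i j k l = D j i k l := by
    intro i j k l
    rw [hDapp, hDapp, m1 i j k l, kdsymm i j, hsa i j]
    ring
  have hsym3 : ∀ i j k l, D i j k l = D i j l k := by
    intro i j k l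
    rw [hDapp, hDapp, m2 i j k l, kdsymm k l, hsa k l]
    ring
  have e0000 : D 0 0 0 0 = D 0 0 0 0 := rfl
  have e0001 : D 0 0 0 1 = D 0 0 0 1 := rfl
  have e0002 : D 0 0 0 2 = D 0 0 0 2 := rfl
  have e0010 : D 0 0 1 0 = D 0 1 0 0 := by
    simp only [hDapp, lamE, muE, k00, k01, k02, k10, k11, k12, k20, k21, k22, aE00, aE01, aE10, bE00, bE01, bE10, s10, s20, s21, t10, t20, t21, u1, u2, u3, u4, u5, u6, u7, u8, u9, u10, u11, u12, u13, u14, u15]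
    ring
  have e0011 : D 0 0 1 1 = D 0 1 0 1 := by
    simp only [hDapp, lamE, muE, k00, k01, k02, k10, k11, k12, k20, k21, k22, aE00, aE01, aE10, aE11, bE00, bE01, bE10, bE11, s10, s20, s21, t10, t20, t21, u1, u2, u3, u4, u5, u6, u7, u8, u9, u10, u11, u12, u13, u14, u15]
    ring
  have e0012 : D 0 0 1 2 = D 0 1 0 2 := by
    simp only [hDapp, lamE, muE, k00, k01, k02, k10, k11, k12, k20, k21, k22, aE00, aE01, aE02, aE10, aE12, aE20, aE21, bE00, bE01, bE02, bE10, bE12, bE20, bE21, s10, s20, s21, t10, t20, t21, u1, u2, u3, u4, u5, u6, u7, u8, u9, u10, u11, u12, u13, u14, u15]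
    ring
  have e0020 : D 0 0 2 0 = D 0 2 0 0 := by
    simp only [hDapp, lamE, muE, k00, k01, k02, k10, k11, k12, k20, k21, k22, aE00, aE02, aE20, bE00, bE02, bE20, s10, s20, s21, t10, t20, t21, u1, u2, u3, u4, u5, u6, u7, u8, u9, u10, u11, u12, u13, u14, u15]
    ring
  have e0021 : D 0 0 2 1 = D 0 2 0 1 := by
    simp only [hDapp, lamE, muE, k00, k01, k02, k10, k11, k12, k20, k21, k22, aE00, aE01, aE02, aE10, aE12, aE20, aE21, bE00, bE01, bE02, bE10, bE12, bE20, bE21, s10, s20, s21, t10, t20, t21, u1, u2, u3, u4, u5, u6, u7, u8, u9, u10, u11, u12, u13, u14, u15]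
    ring
  have e0022 : D 0 0 2 2 = D 0 2 0 2 := by
    simp only [hDapp, lamE, muE, k00, k01, k02, k10, k11, k12, k20, k21, k22, aE00, aE02, aE20, aE22, bE00, bE02, bE20, bE22, s10, s20, s21, t10, t20, t21, u1, u2, u3, u4, u5, u6, u7, u8, u9, u10, u11, u12, u13, u14, u15]
    ring
  have e0100 : D 0 1 0 0 = D 0 0 1 0 := e0010.symm
  have e0101 : D 0 1 0 1 = D 0 0 1 1 := e0011.symm
  have e0102 : D 0 1 0 2 = D 0 0 1 2 := e0012.symm
  have e0110 : D 0 1 1 0 = D 0 1 1 0 := rfl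
  have e0111 : D 0 1 1 1 = D 0 1 1 1 := rfl
  have e0112 : D 0 1 1 2 = D 0 1 1 2 := rfl
  have e0120 : D 0 1 2 0 = D 0 2 1 0 := by
    simp only [hDapp, lamE, muE, k00, k01, k02, k10, k11, k12, k20, k21, k22, aE00, aE01, aE02, aE10, aE12, aE20, aE21, bE00, bE01, bE02, bE10, bE12, bE20, bE21, s10, s20, s21, t10, t20, t21, u1, u2, u3, u4, u5, u6, u7, u8, u9, u10, u11, u12, u13, u14, u15]
    ring
  have e0121 : D 0 1 2 1 = D 0 2 1 1 := by
    simp only [hDapp, lamE, muE, k00, k01, k02, k10, k11, k12, k20, k21, k22, aE01, aE02, aE10, aE11, aE12, aE20, aE21, bE01, bE02, bE10, bE11, bE12, bE20, bE21, s10, s20, s21, t10, t20, t21, u1, u2, u3, u4, u5, u6, u7, u8, u9, u10, u11, u12, u13, u14, u15]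
    ring
  have e0122 : D 0 1 2 2 = D 0 2 1 2 := by
    simp only [hDapp, lamE, muE, k00, k01, k02, k10, k11, k12, k20, k21, k22, aE01, aE02, aE10, aE12, aE20, aE21, aE22, bE01, bE02, bE10, bE12, bE20, bE21, bE22, s10, s20, s21, t10, t20, t21, u1, u2, u3, u4, u5, u6, u7, u8, u9, u10, u11, u12, u13, u14, u15]
    ring
  have e0200 : D 0 2 0 0 = D 0 0 2 0 := e0020.symm
  have e0201 : D 0 2 0 1 = D 0 0 2 1 := e0021.symm
  have e0202 : D 0 2 0 2 = D 0 0 2 2 := e0022.symm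
  have e0210 : D 0 2 1 0 = D 0 1 2 0 := e0120.symm
  have e0211 : D 0 2 1 1 = D 0 1 2 1 := e0121.symm
  have e0212 : D 0 2 1 2 = D 0 1 2 2 := e0122.symm
  have e0220 : D 0 2 2 0 = D 0 2 2 0 := rfl
  have e0221 : D 0 2 2 1 = D 0 2 2 1 := rfl
  have e0222 : D 0 2 2 2 = D 0 2 2 2 := rfl
  have e1000 : D 1 0 0 0 = D 1 0 0 0 := rfl
  have e1001 : D 1 0 0 1 = D 1 0 0 1 := rfl
  have e1002 : D 1 0 0 2 = D 1 0 0 2 := rfl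
  have e1010 : D 1 0 1 0 = D 1 1 0 0 := by
    simp only [hDapp, lamE, muE, k00, k01, k02, k10, k11, k12, k20, k21, k22, aE00, aE01, aE10, aE11, bE00, bE01, bE10, bE11, s10, s20, s21, t10, t20, t21, u1, u2, u3, u4, u5, u6, u7, u8, u9, u10, u11, u12, u13, u14, u15]
    ring
  have e1011 : D 1 0 1 1 = D 1 1 0 1 := by
    simp only [hDapp, lamE, muE, k00, k01, k02, k10, k11, k12, k20, k21, k22, aE01, aE10, aE11, bE01, bE10, bE11, s10, s20, s21, t10, t20, t21, u1, u2, u3, u4, u5, u6, u7, u8, u9, u10, u11, u12, u13, u14, u15]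
    ring
  have e1012 : D 1 0 1 2 = D 1 1 0 2 := by
    simp only [hDapp, lamE, muE, k00, k01, k02, k10, k11, k12, k20, k21, k22, aE01, aE02, aE10, aE11, aE12, aE20, aE21, bE01, bE02, bE10, bE11, bE12, bE20, bE21, s10, s20, s21, t10, t20, t21, u1, u2, u3, u4, u5, u6, u7, u8, u9, u10, u11, u12, u13, u14, u15]
    ring
  have e1020 : D 1 0 2 0 = D 1 2 0 0 := by
    simp only [hDapp, lamE, muE, k00, k01, k02, k10, k11, k12, k20, k21, k22, aE00, aE01, aE02, aE10, aE12, aE20, aE21, bE00, bE01, bE02, bE10, bE12, bE20, bE21, s10, s20, s21, t10, t20, t21, u1, u2, u3, u4, u5, u6, u7, u8, u9, u10, u11, u12, u13, u14, u15]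
    ring
  have e1021 : D 1 0 2 1 = D 1 2 0 1 := by
    simp only [hDapp, lamE, muE, k00, k01, k02, k10, k11, k12, k20, k21, k22, aE01, aE02, aE10, aE11, aE12, aE20, aE21, bE01, bE02, bE10, bE11, bE12, bE20, bE21, s10, s20, s21, t10, t20, t21, u1, u2, u3, u4, u5, u6, u7, u8, u9, u10, u11, u12, u13, u14, u15]
    ring
  have e1022 : D 1 0 2 2 = D 1 2 0 2 := by
    simp only [hDapp, lamE, muE, k00, k01, k02, k10, k11, k12, k20, k21, k22, aE01, aE02, aE10, aE12, aE20, aE21, aE22, bE01, bE02, bE10, bE12, bE20, bE21, bE22, s10, s20, s21, t10, t20, t21, u1, u2, u3, u4, u5, u6, u7, u8, u9, u10, u11, u12, u13, u14, u15]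
    ring
  have e1100 : D 1 1 0 0 = D 1 0 1 0 := e1010.symm
  have e1101 : D 1 1 0 1 = D 1 0 1 1 := e1011.symm
  have e1102 : D 1 1 0 2 = D 1 0 1 2 := e1012.symm
  have e1110 : D 1 1 1 0 = D 1 1 1 0 := rfl
  have e1111 : D 1 1 1 1 = D 1 1 1 1 := rfl
  have e1112 : D 1 1 1 2 = D 1 1 1 2 := rfl
  have e1120 : D 1 1 2 0 = D 1 2 1 0 := by
    simp only [hDapp, lamE, muE, k00, k01, k02, k10, k11, k12, k20, k21, k22, aE01, aE02, aE10, aE11, aE12, aE20, aE21, bE01, bE02, bE10, bE11, bE12, bE20, bE21, s10, s20, s21, t10, t20, t21, u1, u2, u3, u4, u5, u6, u7, u8, u9, u10, u11, u12, u13, u14, u15]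
    ring
  have e1121 : D 1 1 2 1 = D 1 2 1 1 := by
    simp only [hDapp, lamE, muE, k00, k01, k02, k10, k11, k12, k20, k21, k22, aE11, aE12, aE21, bE11, bE12, bE21, s10, s20, s21, t10, t20, t21, u1, u2, u3, u4, u5, u6, u7, u8, u9, u10, u11, u12, u13, u14, u15]
    ring
  have e1122 : D 1 1 2 2 = D 1 2 1 2 := by
    simp only [hDapp, lamE, muE, k00, k01, k02, k10, k11, k12, k20, k21, k22, aE11, aE12, aE21, aE22, bE11, bE12, bE21, bE22, s10, s20, s21, t10, t20, t21, u1, u2, u3, u4, u5, u6, u7, u8, u9, u10, u11, u12, u13, u14, u15]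
    ring
  have e1200 : D 1 2 0 0 = D 1 0 2 0 := e1020.symm
  have e1201 : D 1 2 0 1 = D 1 0 2 1 := e1021.symm
  have e1202 : D 1 2 0 2 = D 1 0 2 2 := e1022.symm
  have e1210 : D 1 2 1 0 = D 1 1 2 0 := e1120.symm
  have e1211 : D 1 2 1 1 = D 1 1 2 1 := e1121.symm
  have e1212 : D 1 2 1 2 = D 1 1 2 2 := e1122.symm
  have e1220 : D 1 2 2 0 = D 1 2 2 0 := rfl
  have e1221 : D 1 2 2 1 = D 1 2 2 1 := rfl
  have e1222 : D 1 2 2 2 = D 1 2 2 2 := rfl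
  have e2000 : D 2 0 0 0 = D 2 0 0 0 := rfl
  have e2001 : D 2 0 0 1 = D 2 0 0 1 := rfl
  have e2002 : D 2 0 0 2 = D 2 0 0 2 := rfl
  have e2010 : D 2 0 1 0 = D 2 1 0 0 := by
    simp only [hDapp, lamE, muE, k00, k01, k02, k10, k11, k12, k20, k21, k22, aE00, aE01, aE02, aE10, aE12, aE20, aE21, bE00, bE01, bE02, bE10, bE12, bE20, bE21, s10, s20, s21, t10, t20, t21, u1, u2, u3, u4, u5, u6, u7, u8, u9, u10, u11, u12, u13, u14, u15]
    ring
  have e2011 : D 2 0 1 1 = D 2 1 0 1 := by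
    simp only [hDapp, lamE, muE, k00, k01, k02, k10, k11, k12, k20, k21, k22, aE01, aE02, aE10, aE11, aE12, aE20, aE21, bE01, bE02, bE10, bE11, bE12, bE20, bE21, s10, s20, s21, t10, t20, t21, u1, u2, u3, u4, u5, u6, u7, u8, u9, u10, u11, u12, u13, u14, u15]
    ring
  have e2012 : D 2 0 1 2 = D 2 1 0 2 := by
    simp only [hDapp, lamE, muE, k00, k01, k02, k10, k11, k12, k20, k21, k22, aE01, aE02, aE10, aE12, aE20, aE21, aE22, bE01, bE02, bE10, bE12, bE20, bE21, bE22, s10, s20, s21, t10, t20, t21, u1, u2, u3, u4, u5, u6, u7, u8, u9, u10, u11, u12, u13, u14, u15]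
    ring
  have e2020 : D 2 0 2 0 = D 2 2 0 0 := by
    simp only [hDapp, lamE, muE, k00, k01, k02, k10, k11, k12, k20, k21, k22, aE00, aE02, aE20, aE22, bE00, bE02, bE20, bE22, s10, s20, s21, t10, t20, t21, u1, u2, u3, u4, u5, u6, u7, u8, u9, u10, u11, u12, u13, u14, u15]
    ring
  have e2021 : D 2 0 2 1 = D 2 2 0 1 := by
    simp only [hDapp, lamE, muE, k00, k01, k02, k10, k11, k12, k20, k21, k22, aE01, aE02, aE10, aE12, aE20, aE21, aE22, bE01, bE02, bE10, bE12, bE20, bE21, bE22, s10, s20, s21, t10, t20, t21, u1, u2, u3, u4, u5, u6, u7, u8, u9, u10, u11, u12, u13, u14, u15]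
    ring
  have e2022 : D 2 0 2 2 = D 2 2 0 2 := by
    simp only [hDapp, lamE, muE, k00, k01, k02, k10, k11, k12, k20, k21, k22, aE02, aE20, aE22, bE02, bE20, bE22, s10, s20, s21, t10, t20, t21, u1, u2, u3, u4, u5, u6, u7, u8, u9, u10, u11, u12, u13, u14, u15]
    ring
  have e2100 : D 2 1 0 0 = D 2 0 1 0 := e2010.symm
  have e2101 : D 2 1 0 1 = D 2 0 1 1 := e2011.symm
  have e2102 : D 2 1 0 2 = D 2 0 1 2 := e2012.symm
  have e2110 : D 2 1 1 0 = D 2 1 1 0 := rfl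
  have e2111 : D 2 1 1 1 = D 2 1 1 1 := rfl
  have e2112 : D 2 1 1 2 = D 2 1 1 2 := rfl
  have e2120 : D 2 1 2 0 = D 2 2 1 0 := by
    simp only [hDapp, lamE, muE, k00, k01, k02, k10, k11, k12, k20, k21, k22, aE01, aE02, aE10, aE12, aE20, aE21, aE22, bE01, bE02, bE10, bE12, bE20, bE21, bE22, s10, s20, s21, t10, t20, t21, u1, u2, u3, u4, u5, u6, u7, u8, u9, u10, u11, u12, u13, u14, u15]
    ring
  have e2121 : D 2 1 2 1 = D 2 2 1 1 := by
    simp only [hDapp, lamE, muE, k00, k01, k02, k10, k11, k12, k20, k21, k22, aE11, aE12, aE21, aE22, bE11, bE12, bE21, bE22, s10, s20, s21, t10, t20, t21, u1, u2, u3, u4, u5, u6, u7, u8, u9, u10, u11, u12, u13, u14, u15]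
    ring
  have e2122 : D 2 1 2 2 = D 2 2 1 2 := by
    simp only [hDapp, lamE, muE, k00, k01, k02, k10, k11, k12, k20, k21, k22, aE12, aE21, aE22, bE12, bE21, bE22, s10, s20, s21, t10, t20, t21, u1, u2, u3, u4, u5, u6, u7, u8, u9, u10, u11, u12, u13, u14, u15]
    ring
  have e2200 : D 2 2 0 0 = D 2 0 2 0 := e2020.symm
  have e2201 : D 2 2 0 1 = D 2 0 2 1 := e2021.symm
  have e2202 : D 2 2 0 2 = D 2 0 2 2 := e2022.symm
  have e2210 : D 2 2 1 0 = D 2 1 2 0 := e2120.symm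
  have e2211 : D 2 2 1 1 = D 2 1 2 1 := e2121.symm
  have e2212 : D 2 2 1 2 = D 2 1 2 2 := e2122.symm
  have e2220 : D 2 2 2 0 = D 2 2 2 0 := rfl
  have e2221 : D 2 2 2 1 = D 2 2 2 1 := rfl
  have e2222 : D 2 2 2 2 = D 2 2 2 2 := rfl
  have hsym2 : ∀ i j k l, D i j k l = D i k j l :=
    fin3_all (fin3_all (fin3_all (fin3_all e0000 e0001 e0002) (fin3_all e0010 e0011 e0012) (fin3_all e0020 e0021 e0022)) (fin3_all (fin3_all e0100 e0101 e0102) (fin3_all e0110 e0111 e0112) (fin3_all e0120 e0121 e0122)) (fin3_all (fin3_all e0200 e0201 e0202) (fin3_all e0210 e0211 e0212) (fin3_all e0220 e0221 e0222))) (fin3_all (fin3_all (fin3_all e1000 e1001 e1002) (fin3_all e1010 e1011 e1012) (fin3_all e1020 e1021 e1022)) (fin3_all (fin3_all e1100 e1101 e1102) (fin3_all e1110 e1111 e1112) (fin3_all e1120 e1121 e1122)) (fin3_all (fin3_all e1200 e1201 e1202) (fin3_all e1210 e1211 e1212) (fin3_all e1220 e1221 e1222))) (fin3_all (fin3_all (fin3_all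 e2000 e2001 e2002) (fin3_all e2010 e2011 e2012) (fin3_all e2020 e2021 e2022)) (fin3_all (fin3_all e2100 e2101 e2102) (fin3_all e2110 e2111 e2112) (fin3_all e2120 e2121 e2122)) (fin3_all (fin3_all e2200 e2201 e2202) (fin3_all e2210 e2211 e2212) (fin3_all e2220 e2221 e2222)))
  have g00 : D 0 0 0 0 + D 1 1 0 0 + D 2 2 0 0 = 0 := by
    simp only [hDapp, lamE, muE, k00, k01, k02, k10, k11, k12, k20, k21, k22, aE00, aE01, aE02, aE10, aE11, aE20, aE22, bE00, bE01, bE02, bE10, bE11, bE20, bE22, s10, s20, s21, t10, t20, t21, u1, u2, u3, u4, u5, u6, u7, u8, u9, u10, u11, u12, u13, u14, u15]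
    ring
  have g01 : D 0 0 0 1 + D 1 1 0 1 + D 2 2 0 1 = 0 := by
    simp only [hDapp, lamE, muE, k00, k01, k02, k10, k11, k12, k20, k21, k22, aE00, aE01, aE02, aE10, aE11, aE12, aE20, aE21, aE22, bE00, bE01, bE02, bE10, bE11, bE12, bE20, bE21, bE22, s10, s20, s21, t10, t20, t21, u1, u2, u3, u4, u5, u6, u7, u8, u9, u10, u11, u12, u13, u14, u15]
    ring
  have g02 : D 0 0 0 2 + D 1 1 0 2 + D 2 2 0 2 = 0 := by
    simp only [hDapp, lamE, muE, k00, k01, k02, k10, k11, k12, k20, k21, k22, aE00, aE01, aE02, aE10, aE11, aE12, aE20, aE21, aE22, bE00, bE01, bE02, bE10, bE11, bE12, bE20, bE21, bE22, s10, s20, s21, t10, t20, t21, u1, u2, u3, u4, u5, u6, u7, u8, u9, u10, u11, u12, u13, u14, u15]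
    ring
  have g10 : D 0 0 1 0 + D 1 1 1 0 + D 2 2 1 0 = 0 := by
    simp only [hDapp, lamE, muE, k00, k01, k02, k10, k11, k12, k20, k21, k22, aE00, aE01, aE02, aE10, aE11, aE12, aE20, aE21, aE22, bE00, bE01, bE02, bE10, bE11, bE12, bE20, bE21, bE22, s10, s20, s21, t10, t20, t21, u1, u2, u3, u4, u5, u6, u7, u8, u9, u10, u11, u12, u13, u14, u15]
    ring
  have g11 : D 0 0 1 1 + D 1 1 1 1 + D 2 2 1 1 = 0 := by
    simp only [hDapp, lamE, muE, k00, k01, k02, k10, k11, k12, k20, k21, k22, aE00, aE01, aE10, aE11, aE12, aE21, aE22, bE00, bE01, bE10, bE11, bE12, bE21, bE22, s10, s20, s21, t10, t20, t21, u1, u2, u3, u4, u5, u6, u7, u8, u9, u10, u11, u12, u13, u14, u15]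
    ring
  have g12 : D 0 0 1 2 + D 1 1 1 2 + D 2 2 1 2 = 0 := by
    simp only [hDapp, lamE, muE, k00, k01, k02, k10, k11, k12, k20, k21, k22, aE00, aE01, aE02, aE10, aE11, aE12, aE20, aE21, aE22, bE00, bE01, bE02, bE10, bE11, bE12, bE20, bE21, bE22, s10, s20, s21, t10, t20, t21, u1, u2, u3, u4, u5, u6, u7, u8, u9, u10, u11, u12, u13, u14, u15]
    ring
  have g20 : D 0 0 2 0 + D 1 1 2 0 + D 2 2 2 0 = 0 := by
    simp only [hDapp, lamE, muE, k00, k01, k02, k10, k11, k12, k20, k21, k22, aE00, aE01, aE02, aE10, aE11, aE12, aE20, aE21, aE22, bE00, bE01, bE02, bE10, bE11, bE12, bE20, bE21, bE22, s10, s20, s21, t10, t20, t21, u1, u2, u3, u4, u5, u6, u7, u8, u9, u10, u11, u12, u13, u14, u15]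
    ring
  have g21 : D 0 0 2 1 + D 1 1 2 1 + D 2 2 2 1 = 0 := by
    simp only [hDapp, lamE, muE, k00, k01, k02, k10, k11, k12, k20, k21, k22, aE00, aE01, aE02, aE10, aE11, aE12, aE20, aE21, aE22, bE00, bE01, bE02, bE10, bE11, bE12, bE20, bE21, bE22, s10, s20, s21, t10, t20, t21, u1, u2, u3, u4, u5, u6, u7, u8, u9, u10, u11, u12, u13, u14, u15]
    ring
  have g22 : D 0 0 2 2 + D 1 1 2 2 + D 2 2 2 2 = 0 := by
    simp only [hDapp, lamE, muE, k00, k01, k02, k10, k11, k12, k20, k21, k22, aE00, aE02, aE11, aE12, aE20, aE21, aE22, bE00, bE02, bE11, bE12, bE20, bE21, bE22, s10, s20, s21, t10, t20, t21, u1, u2, u3, u4, u5, u6, u7, u8, u9, u10, u11, u12, u13, u14, u15]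
    ring
  have htr0' : ∀ i j, D 0 0 i j + D 1 1 i j + D 2 2 i j = 0 :=
    fin3_all (fin3_all g00 g01 g02) (fin3_all g10 g11 g12) (fin3_all g20 g21 g22)
  have htr0 : ∀ i j, ∑ k, D k k i j = 0 := by
    intro i j
    rw [Fin.sum_univ_three]
    exact htr0' i j
  refine ⟨lam, mu, a, b, D, ⟨haT, hatr, hbT, hbtr, ⟨hsym1, hsym2, hsym3, htr0⟩, hHD⟩,
    ⟨hlamdef, hmudef, hadef, hbdef⟩, ?_⟩
  rintro lam' mu' a' b' D' ⟨haT', hatr', hbT', hbtr', ⟨hs1', hs2', hs3', htr'⟩, hdec'⟩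
  have hsa' : ∀ p q, a' p q = a' q p := by
    intro p q
    have h := Matrix.ext_iff.mpr haT' q p
    rwa [Matrix.transpose_apply] at h
  have hsb' : ∀ p q, b' p q = b' q p := by
    intro p q
    have h := Matrix.ext_iff.mpr hbT' q p
    rwa [Matrix.transpose_apply] at h
  have htra' : a' 0 0 + a' 1 1 + a' 2 2 = 0 := by
    simpa [Matrix.trace, Matrix.diag, Fin.sum_univ_three] using hatr'
  have htrb' : b' 0 0 + b' 1 1 + b' 2 2 = 0 := by
    simpa [Matrix.trace, Matrix.diag, Fin.sum_univ_three] using hbtr'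
  have hDtr1 : ∀ i j, D' 0 0 i j + D' 1 1 i j + D' 2 2 i j = 0 := by
    intro i j
    simpa [Fin.sum_univ_three] using htr' i j
  have hDtr2 : ∀ i j, D' 0 i 0 j + D' 1 i 1 j + D' 2 i 2 j = 0 := by
    intro i j
    have h := hDtr1 i j
    rw [← hs2' 0 i 0 j, ← hs2' 1 i 1 j, ← hs2' 2 i 2 j] at h
    exact h
  have hA00 : dil C 0 0 = (3 * lam' + 2 * mu') * kd 0 0 + 3 * a' 0 0 + 4 * b' 0 0 := by
    have h1 : dil C 0 0 = C 0 0 0 0 + C 1 1 0 0 + C 2 2 0 0 := by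
      simp [dil, Fin.sum_univ_three]
    have ht := hDtr1 0 0
    rw [h1, hdec' 0 0 0 0, hdec' 1 1 0 0, hdec' 2 2 0 0]
    simp only [k00, k01, k02, k10, k11, k12, k20, k21, k22]
    linarith only [hsa' 0 1, hsa' 0 2, hsa' 1 2, hsb' 0 1, hsb' 0 2, hsb' 1 2, htra', htrb', ht]
  have hA01 : dil C 0 1 = (3 * lam' + 2 * mu') * kd 0 1 + 3 * a' 0 1 + 4 * b' 0 1 := by
    have h1 : dil C 0 1 = C 0 0 0 1 + C 1 1 0 1 + C 2 2 0 1 := by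
      simp [dil, Fin.sum_univ_three]
    have ht := hDtr1 0 1
    rw [h1, hdec' 0 0 0 1, hdec' 1 1 0 1, hdec' 2 2 0 1]
    simp only [k00, k01, k02, k10, k11, k12, k20, k21, k22]
    linarith only [hsa' 0 1, hsa' 0 2, hsa' 1 2, hsb' 0 1, hsb' 0 2, hsb' 1 2, htra', htrb', ht]
  have hA02 : dil C 0 2 = (3 * lam' + 2 * mu') * kd 0 2 + 3 * a' 0 2 + 4 * b' 0 2 := by
    have h1 : dil C 0 2 = C 0 0 0 2 + C 1 1 0 2 + C 2 2 0 2 := by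
      simp [dil, Fin.sum_univ_three]
    have ht := hDtr1 0 2
    rw [h1, hdec' 0 0 0 2, hdec' 1 1 0 2, hdec' 2 2 0 2]
    simp only [k00, k01, k02, k10, k11, k12, k20, k21, k22]
    linarith only [hsa' 0 1, hsa' 0 2, hsa' 1 2, hsb' 0 1, hsb' 0 2, hsb' 1 2, htra', htrb', ht]
  have hA10 : dil C 1 0 = (3 * lam' + 2 * mu') * kd 1 0 + 3 * a' 1 0 + 4 * b' 1 0 := by
    have h1 : dil C 1 0 = C 0 0 1 0 + C 1 1 1 0 + C 2 2 1 0 := by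
      simp [dil, Fin.sum_univ_three]
    have ht := hDtr1 1 0
    rw [h1, hdec' 0 0 1 0, hdec' 1 1 1 0, hdec' 2 2 1 0]
    simp only [k00, k01, k02, k10, k11, k12, k20, k21, k22]
    linarith only [hsa' 0 1, hsa' 0 2, hsa' 1 2, hsb' 0 1, hsb' 0 2, hsb' 1 2, htra', htrb', ht]
  have hA11 : dil C 1 1 = (3 * lam' + 2 * mu') * kd 1 1 + 3 * a' 1 1 + 4 * b' 1 1 := by
    have h1 : dil C 1 1 = C 0 0 1 1 + C 1 1 1 1 + C 2 2 1 1 := by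
      simp [dil, Fin.sum_univ_three]
    have ht := hDtr1 1 1
    rw [h1, hdec' 0 0 1 1, hdec' 1 1 1 1, hdec' 2 2 1 1]
    simp only [k00, k01, k02, k10, k11, k12, k20, k21, k22]
    linarith only [hsa' 0 1, hsa' 0 2, hsa' 1 2, hsb' 0 1, hsb' 0 2, hsb' 1 2, htra', htrb', ht]
  have hA12 : dil C 1 2 = (3 * lam' + 2 * mu') * kd 1 2 + 3 * a' 1 2 + 4 * b' 1 2 := by
    have h1 : dil C 1 2 = C 0 0 1 2 + C 1 1 1 2 + C 2 2 1 2 := by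
      simp [dil, Fin.sum_univ_three]
    have ht := hDtr1 1 2
    rw [h1, hdec' 0 0 1 2, hdec' 1 1 1 2, hdec' 2 2 1 2]
    simp only [k00, k01, k02, k10, k11, k12, k20, k21, k22]
    linarith only [hsa' 0 1, hsa' 0 2, hsa' 1 2, hsb' 0 1, hsb' 0 2, hsb' 1 2, htra', htrb', ht]
  have hA20 : dil C 2 0 = (3 * lam' + 2 * mu') * kd 2 0 + 3 * a' 2 0 + 4 * b' 2 0 := by
    have h1 : dil C 2 0 = C 0 0 2 0 + C 1 1 2 0 + C 2 2 2 0 := by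
      simp [dil, Fin.sum_univ_three]
    have ht := hDtr1 2 0
    rw [h1, hdec' 0 0 2 0, hdec' 1 1 2 0, hdec' 2 2 2 0]
    simp only [k00, k01, k02, k10, k11, k12, k20, k21, k22]
    linarith only [hsa' 0 1, hsa' 0 2, hsa' 1 2, hsb' 0 1, hsb' 0 2, hsb' 1 2, htra', htrb', ht]
  have hA21 : dil C 2 1 = (3 * lam' + 2 * mu') * kd 2 1 + 3 * a' 2 1 + 4 * b' 2 1 := by
    have h1 : dil C 2 1 = C 0 0 2 1 + C 1 1 2 1 + C 2 2 2 1 := by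
      simp [dil, Fin.sum_univ_three]
    have ht := hDtr1 2 1
    rw [h1, hdec' 0 0 2 1, hdec' 1 1 2 1, hdec' 2 2 2 1]
    simp only [k00, k01, k02, k10, k11, k12, k20, k21, k22]
    linarith only [hsa' 0 1, hsa' 0 2, hsa' 1 2, hsb' 0 1, hsb' 0 2, hsb' 1 2, htra', htrb', ht]
  have hA22 : dil C 2 2 = (3 * lam' + 2 * mu') * kd 2 2 + 3 * a' 2 2 + 4 * b' 2 2 := by
    have h1 : dil C 2 2 = C 0 0 2 2 + C 1 1 2 2 + C 2 2 2 2 := by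
      simp [dil, Fin.sum_univ_three]
    have ht := hDtr1 2 2
    rw [h1, hdec' 0 0 2 2, hdec' 1 1 2 2, hdec' 2 2 2 2]
    simp only [k00, k01, k02, k10, k11, k12, k20, k21, k22]
    linarith only [hsa' 0 1, hsa' 0 2, hsa' 1 2, hsb' 0 1, hsb' 0 2, hsb' 1 2, htra', htrb', ht]
  have hA : ∀ i j, dil C i j = (3 * lam' + 2 * mu') * kd i j + 3 * a' i j + 4 * b' i j :=
    fin3_all (fin3_all hA00 hA01 hA02) (fin3_all hA10 hA11 hA12) (fin3_all hA20 hA21 hA22)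
  have hB00 : voigt C 0 0 = (lam' + 4 * mu') * kd 0 0 + 2 * a' 0 0 + 5 * b' 0 0 := by
    have h1 : voigt C 0 0 = C 0 0 0 0 + C 1 0 1 0 + C 2 0 2 0 := by
      simp [voigt, Fin.sum_univ_three]
    have ht := hDtr2 0 0
    rw [h1, hdec' 0 0 0 0, hdec' 1 0 1 0, hdec' 2 0 2 0]
    simp only [k00, k01, k02, k10, k11, k12, k20, k21, k22]
    linarith only [hsa' 0 1, hsa' 0 2, hsa' 1 2, hsb' 0 1, hsb' 0 2, hsb' 1 2, htra', htrb', ht]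
  have hB01 : voigt C 0 1 = (lam' + 4 * mu') * kd 0 1 + 2 * a' 0 1 + 5 * b' 0 1 := by
    have h1 : voigt C 0 1 = C 0 0 0 1 + C 1 0 1 1 + C 2 0 2 1 := by
      simp [voigt, Fin.sum_univ_three]
    have ht := hDtr2 0 1
    rw [h1, hdec' 0 0 0 1, hdec' 1 0 1 1, hdec' 2 0 2 1]
    simp only [k00, k01, k02, k10, k11, k12, k20, k21, k22]
    linarith only [hsa' 0 1, hsa' 0 2, hsa' 1 2, hsb' 0 1, hsb' 0 2, hsb' 1 2, htra', htrb', ht]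
  have hB02 : voigt C 0 2 = (lam' + 4 * mu') * kd 0 2 + 2 * a' 0 2 + 5 * b' 0 2 := by
    have h1 : voigt C 0 2 = C 0 0 0 2 + C 1 0 1 2 + C 2 0 2 2 := by
      simp [voigt, Fin.sum_univ_three]
    have ht := hDtr2 0 2
    rw [h1, hdec' 0 0 0 2, hdec' 1 0 1 2, hdec' 2 0 2 2]
    simp only [k00, k01, k02, k10, k11, k12, k20, k21, k22]
    linarith only [hsa' 0 1, hsa' 0 2, hsa' 1 2, hsb' 0 1, hsb' 0 2, hsb' 1 2, htra', htrb', ht]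
  have hB10 : voigt C 1 0 = (lam' + 4 * mu') * kd 1 0 + 2 * a' 1 0 + 5 * b' 1 0 := by
    have h1 : voigt C 1 0 = C 0 1 0 0 + C 1 1 1 0 + C 2 1 2 0 := by
      simp [voigt, Fin.sum_univ_three]
    have ht := hDtr2 1 0
    rw [h1, hdec' 0 1 0 0, hdec' 1 1 1 0, hdec' 2 1 2 0]
    simp only [k00, k01, k02, k10, k11, k12, k20, k21, k22]
    linarith only [hsa' 0 1, hsa' 0 2, hsa' 1 2, hsb' 0 1, hsb' 0 2, hsb' 1 2, htra', htrb', ht]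
  have hB11 : voigt C 1 1 = (lam' + 4 * mu') * kd 1 1 + 2 * a' 1 1 + 5 * b' 1 1 := by
    have h1 : voigt C 1 1 = C 0 1 0 1 + C 1 1 1 1 + C 2 1 2 1 := by
      simp [voigt, Fin.sum_univ_three]
    have ht := hDtr2 1 1
    rw [h1, hdec' 0 1 0 1, hdec' 1 1 1 1, hdec' 2 1 2 1]
    simp only [k00, k01, k02, k10, k11, k12, k20, k21, k22]
    linarith only [hsa' 0 1, hsa' 0 2, hsa' 1 2, hsb' 0 1, hsb' 0 2, hsb' 1 2, htra', htrb', ht]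
  have hB12 : voigt C 1 2 = (lam' + 4 * mu') * kd 1 2 + 2 * a' 1 2 + 5 * b' 1 2 := by
    have h1 : voigt C 1 2 = C 0 1 0 2 + C 1 1 1 2 + C 2 1 2 2 := by
      simp [voigt, Fin.sum_univ_three]
    have ht := hDtr2 1 2
    rw [h1, hdec' 0 1 0 2, hdec' 1 1 1 2, hdec' 2 1 2 2]
    simp only [k00, k01, k02, k10, k11, k12, k20, k21, k22]
    linarith only [hsa' 0 1, hsa' 0 2, hsa' 1 2, hsb' 0 1, hsb' 0 2, hsb' 1 2, htra', htrb', ht]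
  have hB20 : voigt C 2 0 = (lam' + 4 * mu') * kd 2 0 + 2 * a' 2 0 + 5 * b' 2 0 := by
    have h1 : voigt C 2 0 = C 0 2 0 0 + C 1 2 1 0 + C 2 2 2 0 := by
      simp [voigt, Fin.sum_univ_three]
    have ht := hDtr2 2 0
    rw [h1, hdec' 0 2 0 0, hdec' 1 2 1 0, hdec' 2 2 2 0]
    simp only [k00, k01, k02, k10, k11, k12, k20, k21, k22]
    linarith only [hsa' 0 1, hsa' 0 2, hsa' 1 2, hsb' 0 1, hsb' 0 2, hsb' 1 2, htra', htrb', ht]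
  have hB21 : voigt C 2 1 = (lam' + 4 * mu') * kd 2 1 + 2 * a' 2 1 + 5 * b' 2 1 := by
    have h1 : voigt C 2 1 = C 0 2 0 1 + C 1 2 1 1 + C 2 2 2 1 := by
      simp [voigt, Fin.sum_univ_three]
    have ht := hDtr2 2 1
    rw [h1, hdec' 0 2 0 1, hdec' 1 2 1 1, hdec' 2 2 2 1]
    simp only [k00, k01, k02, k10, k11, k12, k20, k21, k22]
    linarith only [hsa' 0 1, hsa' 0 2, hsa' 1 2, hsb' 0 1, hsb' 0 2, hsb' 1 2, htra', htrb', ht]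
  have hB22 : voigt C 2 2 = (lam' + 4 * mu') * kd 2 2 + 2 * a' 2 2 + 5 * b' 2 2 := by
    have h1 : voigt C 2 2 = C 0 2 0 2 + C 1 2 1 2 + C 2 2 2 2 := by
      simp [voigt, Fin.sum_univ_three]
    have ht := hDtr2 2 2
    rw [h1, hdec' 0 2 0 2, hdec' 1 2 1 2, hdec' 2 2 2 2]
    simp only [k00, k01, k02, k10, k11, k12, k20, k21, k22]
    linarith only [hsa' 0 1, hsa' 0 2, hsa' 1 2, hsb' 0 1, hsb' 0 2, hsb' 1 2, htra', htrb', ht]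
  have hB : ∀ i j, voigt C i j = (lam' + 4 * mu') * kd i j + 2 * a' i j + 5 * b' i j :=
    fin3_all (fin3_all hB00 hB01 hB02) (fin3_all hB10 hB11 hB12) (fin3_all hB20 hB21 hB22)
  have htrd : (dil C).trace = 9 * lam' + 6 * mu' := by
    have h0 := hA 0 0
    have h1 := hA 1 1
    have h2 := hA 2 2
    simp only [k00, k11, k22] at h0 h1 h2
    simp only [Matrix.trace, Matrix.diag, Fin.sum_univ_three]
    linarith only [h0, h1, h2, htra', htrb']
  have htrv : (voigt C).trace = 3 * lam' + 12 * mu' := by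
    have h0 := hB 0 0
    have h1 := hB 1 1
    have h2 := hB 2 2
    simp only [k00, k11, k22] at h0 h1 h2
    simp only [Matrix.trace, Matrix.diag, Fin.sum_univ_three]
    linarith only [h0, h1, h2, htra', htrb']
  have hlam : lam' = lam := by
    rw [hlamdef, htrd, htrv]; ring
  have hmu : mu' = mu := by
    rw [hmudef, htrd, htrv]; ring
  have hdevdA : ∀ i j, dev (dil C) i j = 3 * a' i j + 4 * b' i j := by
    intro i j
    rw [hdeventry, hA i j, htrd]
    by_cases h : i = j
    · subst h; simp [kd]; try ring
    · simp [kd, h]; try ring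
  have hdevvA : ∀ i j, dev (voigt C) i j = 2 * a' i j + 5 * b' i j := by
    intro i j
    rw [hdeventry, hB i j, htrv]
    by_cases h : i = j
    · subst h; simp [kd]; try ring
    · simp [kd, h]; try ring
  have haeq : a' = a := by
    ext i j
    rw [haentry i j, hdevdA i j, hdevvA i j]
    ring
  have hbeq : b' = b := by
    ext i j
    rw [hbentry i j, hdevdA i j, hdevvA i j]
    ring
  have hDeq : D' = D := by
    funext i j k l
    have e := hdec' i j k l
    have f := hHD i j k l
    rw [hlam, hmu, haeq, hbeq] at e
    linarith only [e, f]
  exact ⟨hlam, hmu, haeq, hbeq, hDeq⟩
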